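/- Let n, q be positive integers, let X be a real n × (q+1) matrix of rank q+1, let t_1,…,t_n ∈ (0,1), ζ_1,…,ζ_n > 0, and p ∈ (1,2). Define the diagonal matrices D^O = diag( t_i^{2−p}·ζ_i^{2−p} ) and D^R = diag( t_i·ζ_i^{2−p} ). Then XᵀD^O X − XᵀD^R X is a positive definite (q+1) × (q+1) matrix. -/

import Mathlib

open Matrix Real

/-- The difference `XᵀD^O X − XᵀD^R X` between the offset and ratio Fisher
information cores is positive definite when all exposures satisfy
`0 < t_i < 1` and `p ∈ (1,2)`. -/
theorem fisher_core_diff_posDef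
    (n q : ℕ) (hn : 0 < n) (hq : 0 < q)
    (X : Matrix (Fin n) (Fin (q + 1)) ℝ) (hX : X.rank = q + 1)
    (t ζ : Fin n → ℝ)
    (ht0 : ∀ i, 0 < t i) (ht1 : ∀ i, t i < 1)
    (hζ : ∀ i, 0 < ζ i)
    (p : ℝ) (hp1 : 1 < p) (hp2 : p < 2)
    (DO DR : Matrix (Fin n) (Fin n) ℝ)
    (hDO : DO = Matrix.diagonal (fun i => t i ^ (2 - p) * ζ i ^ (2 - p)))
    (hDR : DR = Matrix.diagonal (fun i => t i * ζ i ^ (2 - p))) :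
    (Xᵀ * DO * X - Xᵀ * DR * X).PosDef := by
  -- the diagonal entries of DO - DR
  set d : Fin n → ℝ := fun i => (t i ^ (2 - p) - t i) * ζ i ^ (2 - p) with hd
  have hdpos : ∀ i, 0 < d i := by
    intro i
    have h1 : t i < t i ^ (2 - p) := by
      have := Real.rpow_lt_rpow_of_exponent_gt (ht0 i) (ht1 i) (by linarith : 2 - p < 1)
      simpa [Real.rpow_one] using this
    have h2 : 0 < ζ i ^ (2 - p) := Real.rpow_pos_of_pos (hζ i) _
    exact mul_pos (by linarith) h2
  have hEq : Xᵀ * DO * X - Xᵀ * DR * X = Xᵀ * Matrix.diagonal d * X := by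
    have hdiag : Matrix.diagonal (fun i => t i ^ (2 - p) * ζ i ^ (2 - p))
        - Matrix.diagonal (fun i => t i * ζ i ^ (2 - p)) = Matrix.diagonal d := by
      ext i j
      rcases eq_or_ne i j with rfl | h
      · simp [Matrix.diagonal_apply_eq, hd]
        ring
      · simp [Matrix.diagonal_apply_ne _ h]
    subst hDO hDR
    rw [← Matrix.sub_mul, ← Matrix.mul_sub, hdiag]
  rw [hEq]
  -- injectivity of mulVec from full column rank
  have hinj : Function.Injective X.mulVec := by
    have hfr : Module.finrank ℝ (LinearMap.ker X.mulVecLin) = 0 := by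
      have h := LinearMap.finrank_range_add_finrank_ker X.mulVecLin
      have hrank : Module.finrank ℝ (LinearMap.range X.mulVecLin) = q + 1 := hX
      have hdom : Module.finrank ℝ (Fin (q + 1) → ℝ) = q + 1 := by simp
      omega
    have hker : LinearMap.ker X.mulVecLin = ⊥ := Submodule.finrank_eq_zero.mp hfr
    have := LinearMap.ker_eq_bot.mp hker
    exact this
  rw [Matrix.posDef_iff_dotProduct_mulVec]
  constructor
  · have := Matrix.isHermitian_conjTranspose_mul_mul X
      (Matrix.isHermitian_diagonal d)
    simpa [Matrix.conjTranspose_eq_transpose_of_trivial] using this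
  · intro x hx
    have hXx : X *ᵥ x ≠ 0 := by
      intro h
      apply hx
      apply hinj
      simpa using h
    have key : x ⬝ᵥ ((Xᵀ * Matrix.diagonal d * X) *ᵥ x)
        = (X *ᵥ x) ⬝ᵥ (Matrix.diagonal d *ᵥ (X *ᵥ x)) := by
      rw [← Matrix.mulVec_mulVec, ← Matrix.mulVec_mulVec, Matrix.dotProduct_mulVec,
        Matrix.vecMul_transpose]
    have hpd : (Matrix.diagonal d).PosDef := Matrix.PosDef.diagonal hdpos
    have := (Matrix.posDef_iff_dotProduct_mulVec.mp hpd).2 hXx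
    simpa [key] using this
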